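/- For α ∈ (0,1), the equation 4·√((1−αw)(1−w)) = (w−2)² has exactly one solution w ∈ (0,1). -/

import Mathlib

theorem stmt_3 (α : ℝ) (hα : α ∈ Set.Ioo (0 : ℝ) 1) :
    ∃! w : ℝ, w ∈ Set.Ioo (0 : ℝ) 1 ∧
      4 * Real.sqrt ((1 - α * w) * (1 - w)) = (w - 2) ^ 2 := by
  obtain ⟨hα0, hα1⟩ := hα
  set F : ℝ → ℝ := fun w => (w^2 - 7*w + 17)/16 - 1/(16*(1-w)) with hF
  -- the equation is equivalent to F w = α on (0,1)
  have key : ∀ w ∈ Set.Ioo (0:ℝ) 1,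
      (4 * Real.sqrt ((1 - α * w) * (1 - w)) = (w - 2) ^ 2 ↔ F w = α) := by
    rintro w ⟨hw0, hw1⟩
    have h1w : (0:ℝ) < 1 - w := by linarith
    have hαw : α * w < w := mul_lt_of_lt_one_left hw0 hα1
    have hX : (0:ℝ) ≤ (1 - α * w) * (1 - w) := by nlinarith
    constructor
    · intro h
      have hs : Real.sqrt ((1 - α * w) * (1 - w)) = (w-2)^2/4 := by linarith
      have h2 : (1 - α * w) * (1 - w) = ((w-2)^2/4)^2 := by
        rw [← hs, Real.sq_sqrt hX]
      have hpoly : 16*(1 - α * w)*(1 - w) = (w-2)^4 := by linear_combination 16*h2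
      have hmul : w * (-w^3+8*w^2+(16*α-24)*w+16-16*α) = 0 := by
        linear_combination hpoly
      have hh : -w^3+8*w^2+(16*α-24)*w+16-16*α = 0 :=
        (mul_eq_zero.mp hmul).resolve_left (ne_of_gt hw0)
      have hne : (16:ℝ)*(1-w) ≠ 0 := by positivity
      rw [hF]
      field_simp
      linear_combination hh
    · intro h
      rw [hF] at h
      have hne : (16:ℝ)*(1-w) ≠ 0 := by positivity
      field_simp at h
      have h2 : (1 - α * w) * (1 - w) = ((w-2)^2/4)^2 := by
        linear_combination (w/16) * h
      have hs : Real.sqrt ((1 - α * w) * (1 - w)) = (w-2)^2/4 := by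
        rw [h2, Real.sqrt_sq (by positivity)]
      rw [hs]; ring
  -- F is injective on (0,1)
  have inj : ∀ a ∈ Set.Ioo (0:ℝ) 1, ∀ b ∈ Set.Ioo (0:ℝ) 1, F a = F b → a = b := by
    rintro a ⟨ha0, ha1⟩ b ⟨hb0, hb1⟩ hab
    have h1a : (0:ℝ) < 1 - a := by linarith
    have h1b : (0:ℝ) < 1 - b := by linarith
    rw [hF] at hab
    have hnea : (16:ℝ)*(1-a) ≠ 0 := by positivity
    have hneb : (16:ℝ)*(1-b) ≠ 0 := by positivity
    field_simp at hab
    have hfac : (a - b) * ((a+b-7)*((1-a)*(1-b)) - 1) = 0 := by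
      linear_combination hab
    have hneg : (a+b-7)*((1-a)*(1-b)) - 1 < 0 := by nlinarith [mul_neg_of_neg_of_pos (by linarith : a+b-7 < 0) (mul_pos h1a h1b)]
    have := (mul_eq_zero.mp hfac).resolve_right (ne_of_lt hneg)
    linarith
  -- existence via IVT
  have hcont : ContinuousOn F (Set.Icc (0:ℝ) (31/32)) := by
    apply ContinuousOn.sub
    · fun_prop
    · apply ContinuousOn.div continuousOn_const
      · fun_prop
      · rintro x ⟨_, hx2⟩
        have hx1 : x < 1 := lt_of_le_of_lt hx2 (by norm_num)
        have : (0:ℝ) < 16 * (1 - x) := by linarith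
        exact ne_of_gt this
  have hmem : α ∈ Set.Icc (F (31/32)) (F 0) := by
    constructor
    · rw [hF]; norm_num; linarith
    · rw [hF]; norm_num; linarith
  obtain ⟨w, hw, hFw⟩ := intermediate_value_Icc' (by norm_num : (0:ℝ) ≤ 31/32) hcont hmem
  have hw0 : 0 < w := by
    rcases lt_or_eq_of_le hw.1 with h | h
    · exact h
    · exfalso
      rw [← h] at hFw
      rw [hF] at hFw
      norm_num at hFw
      linarith
  have hw1 : w < 1 := lt_of_le_of_lt hw.2 (by norm_num)
  refine ⟨w, ⟨⟨hw0, hw1⟩, (key w ⟨hw0, hw1⟩).mpr hFw⟩, ?_⟩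
  rintro y ⟨hy, hey⟩
  exact inj y hy w ⟨hw0, hw1⟩ (((key y hy).mp hey).trans hFw.symm)
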